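/- Let m, s, n be positive integers with n ≥ 3, let r, r' be units of Z_n with r^(ms) = ±1 and r'^(ms) = ±1, and suppose q := r^{-1}·r' satisfies q^s = ±1. Then the map Φ given by ⟨i; (v_0, v_1, …, v_{s-1})⟩ ↦ ⟨i; (v_0, q·v_1, q²·v_2, …, q^{s-1}·v_{s-1})⟩ is a graph isomorphism from CPMbar(m,s,n;r) to CPMbar(m,s,n;r'). -/

import Mathlib

/-- The graph `CPMbar(m,s,n;r)`: vertex set `Z_{ms} × (Z_n)^s`, where `⟨i;v⟩` is adjacent to
`⟨i+1; v ± r^i · e_ℓ⟩` with `ℓ ≡ i (mod s)`. -/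
def cpmBar (m s n : ℕ) (r : ZMod n) :
    SimpleGraph (ZMod (m * s) × (ZMod s → ZMod n)) :=
  SimpleGraph.fromRel (fun x y => ∃ ε : ZMod n, (ε = 1 ∨ ε = -1) ∧
    y.1 = x.1 + 1 ∧
    y.2 = x.2 + Pi.single (ZMod.castHom (dvd_mul_left s m) (ZMod s) x.1) (ε * r ^ x.1.val))

private lemma aux_single {s n : ℕ} (q : ZMod n) (ℓ : ZMod s) (x2 : ZMod s → ZMod n)
    (d : ZMod n) :
    (fun j : ZMod s => q ^ j.val * ((x2 + Pi.single ℓ d : ZMod s → ZMod n)) j) =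
      (fun j : ZMod s => q ^ j.val * x2 j) + Pi.single ℓ (q ^ ℓ.val * d) := by
  funext j
  by_cases h : j = ℓ
  · subst h; simp [mul_add]
  · simp [Pi.single_eq_of_ne h]


/-- if q = r⁻¹ r' satisfies q^s = ±1 then
Phi : <i;(v_0,v_1,...,v_{s-1})> ↦ <i;(v_0, q v_1, ..., q^{s-1} v_{s-1})> is a graph
isomorphism from CPMbar(m,s,n;r) to CPMbar(m,s,n;r'). -/
theorem stmt7 (m s n : ℕ) (hm : 0 < m) (hs : 0 < s) (hn : 3 ≤ n)
    (r r' : ZMod n) (hu : IsUnit r) (hu' : IsUnit r')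
    (hr : r ^ (m * s) = 1 ∨ r ^ (m * s) = -1)
    (hr' : r' ^ (m * s) = 1 ∨ r' ^ (m * s) = -1)
    (hq : (r⁻¹ * r') ^ s = 1 ∨ (r⁻¹ * r') ^ s = -1) :
    let q : ZMod n := r⁻¹ * r'
    let Φ : ZMod (m * s) × (ZMod s → ZMod n) → ZMod (m * s) × (ZMod s → ZMod n) :=
      fun x => (x.1, fun j => q ^ j.val * x.2 j)
    Function.Bijective Φ ∧
      ∀ x y, (cpmBar m s n r).Adj x y ↔ (cpmBar m s n r').Adj (Φ x) (Φ y) := by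
  intro q Φ
  have hms : NeZero (m * s) := ⟨Nat.mul_ne_zero hm.ne' hs.ne'⟩
  have hsne : NeZero s := ⟨hs.ne'⟩
  have hinv : IsUnit (r⁻¹ : ZMod n) :=
    IsUnit.of_mul_eq_one (a := r⁻¹) r (ZMod.inv_mul_of_unit r hu)
  have hqu : IsUnit q := hinv.mul hu'
  have hrr' : r' = r * q := by
    show r' = r * (r⁻¹ * r')
    rw [← mul_assoc, ZMod.mul_inv_of_unit r hu, one_mul]
  -- powers of q^s are ±1
  have hept : ∀ t : ℕ, (q ^ s) ^ t = 1 ∨ (q ^ s) ^ t = -1 := by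
    intro t
    rcases hq with h | h
    · left; rw [h, one_pow]
    · rw [h]
      rcases Nat.even_or_odd t with ht | ht
      · left; exact ht.neg_one_pow
      · right; exact ht.neg_one_pow
  have he2 : ∀ t : ℕ, (q ^ s) ^ t * (q ^ s) ^ t = 1 := by
    intro t; rcases hept t with h | h <;> rw [h] <;> ring
  have hkey : ∀ i : ℕ, r' ^ i = (q ^ s) ^ (i / s) * q ^ (i % s) * r ^ i := by
    intro i
    have h1 : q ^ i = (q ^ s) ^ (i / s) * q ^ (i % s) := by
      conv_lhs => rw [← Nat.div_add_mod i s]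
      rw [pow_add, pow_mul]
    rw [hrr', mul_pow, h1]; ring
  have hlval : ∀ x : ZMod (m * s),
      ((ZMod.castHom (dvd_mul_left s m) (ZMod s)) x).val = x.val % s := by
    intro x
    rw [ZMod.castHom_apply, ← ZMod.natCast_val, ZMod.val_natCast]
  -- bijectivity
  have hbij : Function.Bijective Φ := by
    rw [Function.bijective_iff_has_inverse]
    refine ⟨fun y => (y.1, fun j => (q ^ j.val)⁻¹ * y.2 j), fun x => ?_, fun y => ?_⟩
    · ext j
      · rfl
      · show (q ^ _)⁻¹ * (q ^ _ * _) = _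
        rw [← mul_assoc, ZMod.inv_mul_of_unit _ (hqu.pow _), one_mul]
    · ext j
      · rfl
      · show q ^ _ * ((q ^ _)⁻¹ * _) = _
        rw [← mul_assoc, ZMod.mul_inv_of_unit _ (hqu.pow _), one_mul]
  refine ⟨hbij, fun x y => ?_⟩
  -- relation equivalence
  have hrel : ∀ x y : ZMod (m * s) × (ZMod s → ZMod n),
      (∃ ε : ZMod n, (ε = 1 ∨ ε = -1) ∧ y.1 = x.1 + 1 ∧
        y.2 = x.2 + Pi.single (ZMod.castHom (dvd_mul_left s m) (ZMod s) x.1)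
          (ε * r ^ x.1.val)) ↔
      (∃ ε : ZMod n, (ε = 1 ∨ ε = -1) ∧ (Φ y).1 = (Φ x).1 + 1 ∧
        (Φ y).2 = (Φ x).2 + Pi.single (ZMod.castHom (dvd_mul_left s m) (ZMod s) (Φ x).1)
          (ε * r' ^ (Φ x).1.val)) := by
    intro x y
    set ℓ := ZMod.castHom (dvd_mul_left s m) (ZMod s) x.1 with hℓ
    set i := x.1.val with hi
    set e := (q ^ s) ^ (i / s) with hedef
    have hsign : ∀ ε : ZMod n, (ε = 1 ∨ ε = -1) → (ε * e = 1 ∨ ε * e = -1) := by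
      intro ε hε
      rcases hε with h | h <;> rcases hept (i / s) with h2 | h2 <;>
        rw [h, ← hedef] at * <;> rw [h2] <;> simp
    have hcoef : ∀ ε : ZMod n, q ^ ℓ.val * (ε * r ^ i) = (ε * e) * r' ^ i := by
      intro ε
      rw [hkey i, hlval, ← hi]
      have := he2 (i / s)
      rw [← hedef] at this ⊢
      calc q ^ (i % s) * (ε * r ^ i) = ε * (1 * (q ^ (i % s) * r ^ i)) := by ring
        _ = ε * (e * e * (q ^ (i % s) * r ^ i)) := by rw [this]
        _ = ε * e * (e * q ^ (i % s) * r ^ i) := by ring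
    constructor
    · rintro ⟨ε, hε, h1, h2⟩
      refine ⟨ε * e, hsign ε hε, h1, ?_⟩
      show (fun j : ZMod s => q ^ j.val * y.2 j) =
        (fun j : ZMod s => q ^ j.val * x.2 j) + Pi.single ℓ ((ε * e) * r' ^ i)
      rw [h2, aux_single, hcoef]
    · rintro ⟨ε, hε, h1, h2⟩
      refine ⟨ε * e, hsign ε hε, h1, ?_⟩
      have h3 : (fun j : ZMod s => q ^ j.val * y.2 j) =
          (fun j : ZMod s => q ^ j.val * ((x.2 + Pi.single ℓ ((ε * e) * r ^ i) : ZMod s → ZMod n)) j) := by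
        rw [aux_single, hcoef]
        have : (ε * e) * e = ε * (e * e) := by ring
        rw [this, he2 (i / s), mul_one]
        exact h2
      funext j
      have := congrFun h3 j
      have h4 := ZMod.inv_mul_of_unit _ (hqu.pow j.val)
      calc y.2 j = 1 * y.2 j := (one_mul _).symm
        _ = (q ^ j.val)⁻¹ * (q ^ j.val * y.2 j) := by rw [← mul_assoc, h4]
        _ = (q ^ j.val)⁻¹ * (q ^ j.val * ((x.2 + Pi.single ℓ ((ε * e) * r ^ i) : ZMod s → ZMod n)) j) := by
            rw [this]
        _ = ((x.2 + Pi.single ℓ ((ε * e) * r ^ i) : ZMod s → ZMod n)) j := by rw [← mul_assoc, h4, one_mul]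
  have hne : x ≠ y ↔ Φ x ≠ Φ y := not_iff_not.mpr ⟨fun h => h ▸ rfl, fun h => hbij.1 h⟩
  simp only [cpmBar, SimpleGraph.fromRel_adj]
  rw [hne, hrel x y, hrel y x]
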